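/- Let G be a graph, H a hex in G, u an internal vertex of a segment P of H, and suppose G is 3-connected. Then there exists a hex H'' in G with the same feet as H except possibly for the two ends of P, together with an H''-path Q (a path with both ends in H'' and no internal vertices or edges in H'') having one end an internal vertex of the segment of H'' corresponding to P, and whose other end lies in V(H'') minus the vertex set of that segment. -/

import Mathlib

open SimpleGraph

universe u

variable {V : Type u}

/-- A planar embedding of a simple graph: vertices go to distinct points of the plane and
edges to arcs (injective topological paths) that meet only at common endpoints. -/
structure PlanarEmbedding (G : SimpleGraph V) where
  vmap : V → ℝ × ℝ
  vmap_inj : Function.Injective vmap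
  arc : ∀ ⦃x y : V⦄, G.Adj x y → _root_.Path (vmap x) (vmap y)
  arc_inj : ∀ ⦃x y : V⦄ (h : G.Adj x y), Function.Injective ⇑(arc h)
  arc_symm : ∀ ⦃x y : V⦄ (h : G.Adj x y), Set.range ⇑(arc h) = Set.range ⇑(arc h.symm)
  arc_vertex : ∀ ⦃x y : V⦄ (h : G.Adj x y) (w : V), vmap w ∈ Set.range ⇑(arc h) → w = x ∨ w = y
  arc_disjoint : ∀ ⦃x y x' y' : V⦄ (h : G.Adj x y) (h' : G.Adj x' y'),
      s(x, y) ≠ s(x', y') →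
      Set.range ⇑(arc h) ∩ Set.range ⇑(arc h') ⊆
        ({vmap x, vmap y} ∩ {vmap x', vmap y'} : Set (ℝ × ℝ))

/-- A graph is planar if it admits a planar embedding. -/
def SimpleGraph.IsPlanar (G : SimpleGraph V) : Prop := Nonempty (PlanarEmbedding G)

/-- `(A, B)` is a bipartition of `G`. -/
def SimpleGraph.IsBipartition (G : SimpleGraph V) (A B : Set V) : Prop :=
  Disjoint A B ∧ A ∪ B = Set.univ ∧
    ∀ ⦃x y : V⦄, G.Adj x y → (x ∈ A ∧ y ∈ B) ∨ (x ∈ B ∧ y ∈ A)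

/-- A finite graph is 3-connected: more than 3 vertices and removing at most 2 vertices
leaves a connected graph. -/
def SimpleGraph.ThreeConnected [Fintype V] (G : SimpleGraph V) : Prop :=
  4 ≤ Fintype.card V ∧ ∀ S : Set V, S.ncard ≤ 2 → (G.induce Sᶜ).Connected

/-- Internally 4-connected: 3-connected, at least five vertices, and no partition
`(A, B, C)` of the vertices with `|A|, |B| ≥ 2`, `|C| = 3` and no edge between `A` and `B`. -/
def SimpleGraph.InternallyFourConnected [Fintype V] (G : SimpleGraph V) : Prop :=
  G.ThreeConnected ∧ 5 ≤ Fintype.card V ∧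
    ¬ ∃ A B C : Set V, A ∪ B ∪ C = Set.univ ∧ Disjoint A B ∧ Disjoint A C ∧ Disjoint B C ∧
      2 ≤ A.ncard ∧ 2 ≤ B.ncard ∧ C.ncard = 3 ∧ ∀ x ∈ A, ∀ y ∈ B, ¬ G.Adj x y

/-- A hex in `G`: a subdivision of `K_{3,3}` with feet `fA 0, fA 1, fA 2` on one side and
`fB 0, fB 1, fB 2` on the other, and nine internally disjoint segments `seg i j`. -/
structure SimpleGraph.Hex (G : SimpleGraph V) where
  fA : Fin 3 → V
  fB : Fin 3 → V
  injA : Function.Injective fA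
  injB : Function.Injective fB
  disjAB : ∀ i j, fA i ≠ fB j
  seg : (i j : Fin 3) → G.Walk (fA i) (fB j)
  seg_path : ∀ i j, (seg i j).IsPath
  seg_meet : ∀ i j i' j', (i, j) ≠ (i', j') → ∀ x : V, x ∈ (seg i j).support →
      x ∈ (seg i' j').support → (x = fA i ∧ i = i') ∨ (x = fB j ∧ j = j')

/-- The number of odd segments of a hex. -/
noncomputable def SimpleGraph.Hex.oddCount {G : SimpleGraph V} (H : G.Hex) : ℕ :=
  (Finset.univ.filter fun p : Fin 3 × Fin 3 => Odd (H.seg p.1 p.2).length).card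

/-- A hex is odd if all nine segments have odd length. -/
def SimpleGraph.Hex.IsOdd {G : SimpleGraph V} (H : G.Hex) : Prop :=
  ∀ i j, Odd (H.seg i j).length

/-- A hex is optimal if no hex of `G` has strictly more odd segments. -/
def SimpleGraph.Hex.Optimal {G : SimpleGraph V} (H : G.Hex) : Prop :=
  ∀ H' : G.Hex, H'.oddCount ≤ H.oddCount

/-- The vertex set of a walk, as a set. -/
def SimpleGraph.Walk.supp {G : SimpleGraph V} {x y : V} (w : G.Walk x y) : Set V :=
  {z | z ∈ w.support}

/-- The vertex set of a hex. -/
def SimpleGraph.Hex.suppSet {G : SimpleGraph V} (H : G.Hex) : Set V :=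
  ⋃ (i : Fin 3) (j : Fin 3), (H.seg i j).supp

/-- The edge set of a hex. -/
def SimpleGraph.Hex.edgeSetH {G : SimpleGraph V} (H : G.Hex) : Set (Sym2 V) :=
  ⋃ (i : Fin 3) (j : Fin 3), {e | e ∈ (H.seg i j).edges}

/-- Along a walk ending in `B` and starting outside `B`, there is an initial subwalk
(as a path, if the walk is a path) reaching `B` for the first time. -/
lemma firstHit_aux {G : SimpleGraph V} (B : Set V) :
    ∀ {a b : V} (w : G.Walk a b), w.IsPath → b ∈ B → a ∉ B →
    ∃ (y : V), y ∈ B ∧ ∃ (w1 : G.Walk a y), w1.IsPath ∧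
      (∀ v ∈ w1.support, v ≠ y → v ∉ B) ∧ (∀ v ∈ w1.support, v ∈ w.support) := by
  intro a b w
  induction w with
  | nil => intro _ hb ha; exact absurd hb ha
  | @cons a c b h w' ih =>
    intro hp hb ha
    by_cases hc : c ∈ B
    · refine ⟨c, hc, Walk.cons h Walk.nil, ?_, ?_, ?_⟩
      · simp [Walk.isPath_def, h.ne]
      · intro v hv hvc
        simp only [Walk.support_cons, Walk.support_nil, List.mem_cons,
          List.mem_singleton] at hv
        rcases hv with rfl | hv
        · exact ha
        · rcases hv with rfl | hv
          · exact absurd rfl hvc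
          · simp at hv
      · intro v hv
        simp only [Walk.support_cons, Walk.support_nil, List.mem_cons,
          List.mem_singleton] at hv ⊢
        rcases hv with rfl | hv
        · exact Or.inl rfl
        · rcases hv with rfl | hv
          · exact Or.inr (Walk.start_mem_support w')
          · simp at hv
    · obtain ⟨y, hy, w1', hw1p, hnoB, hsub⟩ := ih hp.of_cons hb hc
      have haw1 : a ∉ w1'.support := by
        intro hmem
        have : a ∈ w'.support := hsub a hmem
        exact (Walk.cons_isPath_iff h w').mp hp |>.2 this
      refine ⟨y, hy, Walk.cons h w1', ?_, ?_, ?_⟩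
      · exact (Walk.cons_isPath_iff h w1').mpr ⟨hw1p, haw1⟩
      · intro v hv hvy
        simp only [Walk.support_cons, List.mem_cons] at hv
        rcases hv with rfl | hv
        · exact ha
        · exact hnoB v hv hvy
      · intro v hv
        simp only [Walk.support_cons, List.mem_cons] at hv ⊢
        rcases hv with rfl | hv
        · exact Or.inl rfl
        · exact Or.inr (hsub v hv)

/-- In a 3-connected graph, given an internal vertex `u` of a segment `P = seg i j` of a hex
`H`, after possibly rerouting `P` (keeping all other feet) there is a hex `H''` together with
an `H''`-path from an internal vertex of the segment corresponding to `P` to the rest of the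
hex. -/
theorem stmt_17 {V : Type u} [Fintype V] (G : SimpleGraph V) (h3 : G.ThreeConnected)
    (H : G.Hex) (i j : Fin 3) (u : V) (hu : u ∈ (H.seg i j).support)
    (hu1 : u ≠ H.fA i) (hu2 : u ≠ H.fB j) :
    ∃ H'' : G.Hex,
      (∀ i', i' ≠ i → H''.fA i' = H.fA i') ∧ (∀ j', j' ≠ j → H''.fB j' = H.fB j') ∧
      ∃ (x y : V) (q : G.Walk x y), q.IsPath ∧ 0 < q.length ∧
        x ∈ (H''.seg i j).supp ∧ x ≠ H''.fA i ∧ x ≠ H''.fB j ∧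
        y ∈ H''.suppSet ∧ y ∉ (H''.seg i j).supp ∧
        q.supp ∩ H''.suppSet ⊆ {x, y} ∧
        ∀ e ∈ q.edges, e ∉ H''.edgeSetH := by
  classical
  -- delete the two ends of the segment
  set S : Set V := {H.fA i, H.fB j} with hS
  have hScard : S.ncard ≤ 2 := by
    calc S.ncard ≤ ({H.fB j} : Set V).ncard + 1 := Set.ncard_insert_le _ _
    _ ≤ 2 := by rw [Set.ncard_singleton]
  have hconn : (G.induce Sᶜ).Connected := h3.2 S hScard
  -- choose a foot different from `fA i`
  set i' : Fin 3 := if i = 0 then 1 else 0 with hi'def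
  have hi' : i' ≠ i := by
    by_cases h0 : i = 0 <;> simp [hi'def, h0] <;> omega
  set t : V := H.fA i' with ht_def
  have hu' : u ∈ Sᶜ := by
    simp only [hS, Set.mem_compl_iff, Set.mem_insert_iff, Set.mem_singleton_iff]
    tauto
  have ht' : t ∈ Sᶜ := by
    simp only [hS, Set.mem_compl_iff, Set.mem_insert_iff, Set.mem_singleton_iff]
    push_neg
    exact ⟨fun e => hi' (H.injA e), H.disjAB i' j⟩
  -- a path from u to t in G avoiding S
  obtain ⟨w0⟩ := hconn.preconnected ⟨u, hu'⟩ ⟨t, ht'⟩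
  set p0 := w0.toPath with hp0
  set f : G.induce Sᶜ →g G := (SimpleGraph.Embedding.induce Sᶜ).toHom with hf
  have hfinj : Function.Injective f := Subtype.val_injective
  set w : G.Walk u t := Walk.map f (p0 : (G.induce Sᶜ).Walk ⟨u, hu'⟩ ⟨t, ht'⟩) with hw
  have hwp : w.IsPath := Walk.map_isPath_of_injective hfinj p0.2
  have hwS : ∀ v ∈ w.support, v ∈ Sᶜ := by
    intro v hv
    replace hv : v ∈ (Walk.map f (p0 : (G.induce Sᶜ).Walk ⟨u, hu'⟩ ⟨t, ht'⟩)).support := hv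
    rw [Walk.support_map] at hv
    obtain ⟨z, _, rfl⟩ := List.mem_map.mp hv
    exact z.2
  -- the two relevant vertex sets
  set A : Set V := (H.seg i j).supp with hA
  set B : Set V := H.suppSet \ (H.seg i j).supp with hB
  have hdisj : ∀ v, v ∈ A → v ∉ B := fun v hv hv' => hv'.2 hv
  have huA : u ∈ A := hu
  have hseg_mem : ∀ (i₁ j₁ : Fin 3) (v : V), v ∈ (H.seg i₁ j₁).support → v ∈ H.suppSet := by
    intro i₁ j₁ v hv
    exact Set.mem_iUnion.mpr ⟨i₁, Set.mem_iUnion.mpr ⟨j₁, hv⟩⟩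
  have htB : t ∈ B := by
    constructor
    · exact hseg_mem i' j t (Walk.start_mem_support _)
    · intro hmem
      rcases H.seg_meet i' j i j (by simp [Prod.ext_iff]; intro h; exact absurd h hi') t
          (Walk.start_mem_support _) hmem with ⟨_, hii⟩ | ⟨he, _⟩
      · exact hi' hii
      · exact H.disjAB i' j he
  have huB : u ∉ B := hdisj u huA
  -- first hit of B
  obtain ⟨y, hyB, w1, hw1p, hw1noB, hw1sub⟩ := firstHit_aux B w hwp htB huB
  -- last hit of A before y: first hit of A along the reverse of w1
  have hyA : y ∉ A := fun h => hdisj y h hyB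
  obtain ⟨x, hxA, r1, hr1p, hr1noA, hr1sub⟩ :=
    firstHit_aux A w1.reverse hw1p.reverse huA hyA
  set q : G.Walk x y := r1.reverse with hq
  have hqp : q.IsPath := hr1p.reverse
  have hqsupport : ∀ v ∈ q.support, v ∈ r1.support := by
    intro v hv
    rwa [hq, Walk.support_reverse, List.mem_reverse] at hv
  have hqsub1 : ∀ v ∈ q.support, v ∈ w1.support := by
    intro v hv
    have := hr1sub v (hqsupport v hv)
    rwa [Walk.support_reverse, List.mem_reverse] at this
  have hqsubw : ∀ v ∈ q.support, v ∈ w.support := fun v hv => hw1sub v (hqsub1 v hv)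
  have hqS : ∀ v ∈ q.support, v ∈ Sᶜ := fun v hv => hwS v (hqsubw v hv)
  have hqnoA : ∀ v ∈ q.support, v ≠ x → v ∉ A := fun v hv => hr1noA v (hqsupport v hv)
  have hqnoB : ∀ v ∈ q.support, v ≠ y → v ∉ B := fun v hv => hw1noB v (hqsub1 v hv)
  have hxy : x ≠ y := fun h => hdisj x hxA (h ▸ hyB)
  have hqlen : 0 < q.length := by
    rcases Nat.eq_zero_or_pos q.length with h0 | h
    · exact absurd (Walk.eq_of_length_eq_zero h0) hxy
    · exact h
  have hxS : x ∈ Sᶜ := hqS x (Walk.start_mem_support q)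
  have hxS' : x ≠ H.fA i ∧ x ≠ H.fB j := by
    simp only [hS, Set.mem_compl_iff, Set.mem_insert_iff, Set.mem_singleton_iff] at hxS
    tauto
  refine ⟨H, fun _ _ => rfl, fun _ _ => rfl, x, y, q, hqp, hqlen, hxA, hxS'.1, hxS'.2,
    hyB.1, hyB.2, ?_, ?_⟩
  · -- support condition
    intro v ⟨hv, hvH⟩
    by_cases hvx : v = x
    · exact Or.inl hvx
    by_cases hvy : v = y
    · exact Or.inr hvy
    have hv' : v ∈ q.support := hv
    have hnA := hqnoA v hv' hvx
    have hnB := hqnoB v hv' hvy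
    exact absurd ⟨hvH, hnA⟩ hnB
  · -- edge condition
    intro e he hemem
    simp only [Hex.edgeSetH, Set.mem_iUnion, Set.mem_setOf_eq] at hemem
    obtain ⟨i₁, j₁, he₁⟩ := hemem
    induction e using Sym2.ind with
    | _ p₁ p₂ =>
      have hp₁q : p₁ ∈ q.support := Walk.fst_mem_support_of_mem_edges q he
      have hp₂q : p₂ ∈ q.support := Walk.snd_mem_support_of_mem_edges q he
      have hp₁s : p₁ ∈ (H.seg i₁ j₁).support := Walk.fst_mem_support_of_mem_edges _ he₁
      have hp₂s : p₂ ∈ (H.seg i₁ j₁).support := Walk.snd_mem_support_of_mem_edges _ he₁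
      have hne : p₁ ≠ p₂ := (Walk.edges_subset_edgeSet q he).ne
      -- each endpoint in the hex support, hence in {x, y}
      have key : ∀ p : V, p ∈ q.support → p ∈ (H.seg i₁ j₁).support → p = x ∨ p = y := by
        intro p hpq hps
        by_contra hcon
        push_neg at hcon
        have hnA := hqnoA p hpq hcon.1
        have hnB := hqnoB p hpq hcon.2
        exact hnB ⟨hseg_mem i₁ j₁ p hps, hnA⟩
      -- a vertex in {x,y} that lies in seg i₁ j₁ leads to contradiction unless it is x
      have hxyseg : x ∈ (H.seg i₁ j₁).support ∧ y ∈ (H.seg i₁ j₁).support := by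
        rcases key p₁ hp₁q hp₁s with rfl | rfl <;> rcases key p₂ hp₂q hp₂s with rfl | rfl
        · exact absurd rfl hne
        · exact ⟨hp₁s, hp₂s⟩
        · exact ⟨hp₂s, hp₁s⟩
        · exact absurd rfl hne
      by_cases hij : (i₁, j₁) = (i, j)
      · obtain ⟨h1, h2⟩ := Prod.mk.injEq .. ▸ hij
        subst h1; subst h2
        exact hyB.2 hxyseg.2
      · rcases H.seg_meet i j i₁ j₁ (fun h => hij h.symm) x hxA hxyseg.1 with
          ⟨hx1, _⟩ | ⟨hx2, _⟩
        · exact hxS'.1 hx1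
        · exact hxS'.2 hx2
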